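/- If a Young diagram Y with z steps admits an (i,j)-local cover by generalized rectangles, then it admits an (i,j)-local cover consisting of exactly z generalized rectangles. -/

import Mathlib

open scoped Classical

/-- The staircase Young diagram `Y_z = {(s,t) ∈ [z]×[z] : s+t ≤ z+1}`. -/
def Yd (z : ℕ) : Set (ℕ × ℕ) :=
  {p | p.1 ∈ Set.Icc 1 z ∧ p.2 ∈ Set.Icc 1 z ∧ p.1 + p.2 ≤ z + 1}

/-- A Young diagram with `r` rows and `c` columns: a down-left closed subset of `[r]×[c]`. -/
def IsYoung (r c : ℕ) (Y : Set (ℕ × ℕ)) : Prop :=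
  Y ⊆ Set.Icc 1 r ×ˢ Set.Icc 1 c ∧
  ∀ p ∈ Y, (2 ≤ p.1 → (p.1 - 1, p.2) ∈ Y) ∧ (2 ≤ p.2 → (p.1, p.2 - 1) ∈ Y)

/-- A step of `Y`: an element whose right and upper neighbours are outside `Y`. -/
def IsStep (Y : Set (ℕ × ℕ)) (p : ℕ × ℕ) : Prop :=
  p ∈ Y ∧ (p.1 + 1, p.2) ∉ Y ∧ (p.1, p.2 + 1) ∉ Y

def steps (Y : Set (ℕ × ℕ)) : Set (ℕ × ℕ) := {p | IsStep Y p}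

/-- A generalized rectangle in `Y`: a product set contained in `Y`. -/
def IsRect (Y R : Set (ℕ × ℕ)) : Prop :=
  (∃ S T : Set ℕ, R = S ×ˢ T) ∧ R ⊆ Y

/-- An actual rectangle in `Y`: a product of intervals contained in `Y`. -/
def IsActualRect (Y R : Set (ℕ × ℕ)) : Prop :=
  (∃ a b u v : ℕ, R = Set.Icc a b ×ˢ Set.Icc u v) ∧ R ⊆ Y

def UsesRow (R : Set (ℕ × ℕ)) (s : ℕ) : Prop := ∃ t, (s, t) ∈ R
def UsesCol (R : Set (ℕ × ℕ)) (t : ℕ) : Prop := ∃ s, (s, t) ∈ R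

/-- A cover of `Y` by generalized rectangles. -/
def IsCover (Y : Set (ℕ × ℕ)) (C : Finset (Set (ℕ × ℕ))) : Prop :=
  (∀ R ∈ C, IsRect Y R) ∧ (⋃ R ∈ C, R) = Y

/-- `(i,j)`-locality: each row used by at most `i`, each column by at most `j` rectangles. -/
def IsLocal (i j : ℕ) (C : Finset (Set (ℕ × ℕ))) : Prop :=
  (∀ s, (C.filter (fun R => UsesRow R s)).card ≤ i) ∧
  (∀ t, (C.filter (fun R => UsesCol R t)).card ≤ j)

def IsLocalCover (i j : ℕ) (Y : Set (ℕ × ℕ)) (C : Finset (Set (ℕ × ℕ))) : Prop :=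
  IsCover Y C ∧ IsLocal i j C

/-! ### Auxiliary lemmas -/

lemma young_down1 {r c : ℕ} {Y : Set (ℕ × ℕ)} (hY : IsYoung r c Y) :
    ∀ k a b, (a + k, b) ∈ Y → 1 ≤ a → (a, b) ∈ Y := by
  intro k
  induction k with
  | zero => intro a b h _; simpa using h
  | succ n ih =>
    intro a b h ha
    have h3 : (a + (n + 1) - 1, b) ∈ Y := (hY.2 _ h).1 (by show 2 ≤ a + (n+1); omega)
    have h4 : (a + n, b) ∈ Y := by
      rw [show a + (n + 1) - 1 = a + n from by omega] at h3; exact h3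
    exact ih a b h4 ha

lemma young_down2 {r c : ℕ} {Y : Set (ℕ × ℕ)} (hY : IsYoung r c Y) :
    ∀ k a b, (a, b + k) ∈ Y → 1 ≤ b → (a, b) ∈ Y := by
  intro k
  induction k with
  | zero => intro a b h _; simpa using h
  | succ n ih =>
    intro a b h hb
    have h3 : (a, b + (n + 1) - 1) ∈ Y := (hY.2 _ h).2 (by show 2 ≤ b + (n+1); omega)
    have h4 : (a, b + n) ∈ Y := by
      rw [show b + (n + 1) - 1 = b + n from by omega] at h3; exact h3
    exact ih a b h4 hb

lemma young_down {r c : ℕ} {Y : Set (ℕ × ℕ)} (hY : IsYoung r c Y)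
    {a b a' b' : ℕ} (h : (a, b) ∈ Y) (h1 : 1 ≤ a') (h2 : a' ≤ a)
    (h3 : 1 ≤ b') (h4 : b' ≤ b) : (a', b') ∈ Y := by
  obtain ⟨k, rfl⟩ := Nat.exists_eq_add_of_le h2
  have hab : (a', b) ∈ Y := young_down1 hY k a' b h h1
  obtain ⟨m, rfl⟩ := Nat.exists_eq_add_of_le h4
  exact young_down2 hY m a' b' hab h3

lemma mem_young_pos {r c : ℕ} {Y : Set (ℕ × ℕ)} (hY : IsYoung r c Y)
    {q : ℕ × ℕ} (hq : q ∈ Y) : 1 ≤ q.1 ∧ 1 ≤ q.2 := by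
  have := hY.1 hq
  exact ⟨this.1.1, this.2.1⟩

/-- A step is the unique element of `Y` dominating itself. -/
lemma step_eq {r c : ℕ} {Y : Set (ℕ × ℕ)} (hY : IsYoung r c Y)
    {p q : ℕ × ℕ} (hp : IsStep Y p) (hq : q ∈ Y)
    (h1 : p.1 ≤ q.1) (h2 : p.2 ≤ q.2) : q = p := by
  have hp1 := mem_young_pos hY hp.1
  have e1 : q.1 = p.1 := by
    by_contra hne
    have hlt : p.1 + 1 ≤ q.1 := by omega
    have : (p.1 + 1, p.2) ∈ Y := by
      have := young_down hY (a := q.1) (b := q.2) (by simpa using hq)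
        (by omega) hlt hp1.2 h2
      exact this
    exact hp.2.1 this
  have e2 : q.2 = p.2 := by
    by_contra hne
    have hlt : p.2 + 1 ≤ q.2 := by omega
    have : (p.1, p.2 + 1) ∈ Y := by
      have := young_down hY (a := q.1) (b := q.2) (by simpa using hq)
        hp1.1 h1 (by omega) hlt
      exact this
    exact hp.2.2 this
  exact Prod.ext e1 e2

lemma exists_step_above {r c : ℕ} {Y : Set (ℕ × ℕ)} (hY : IsYoung r c Y)
    (hfin : Y.Finite) {q : ℕ × ℕ} (hq : q ∈ Y) :
    ∃ p, IsStep Y p ∧ q.1 ≤ p.1 ∧ q.2 ≤ p.2 := by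
  classical
  set F := hfin.toFinset.filter (fun x => q.1 ≤ x.1 ∧ q.2 ≤ x.2) with hF
  have hFne : F.Nonempty := ⟨q, by simp [hF, hfin.mem_toFinset, hq]⟩
  obtain ⟨p, hpF, hmax⟩ := F.exists_max_image (fun x => x.1 + x.2) hFne
  simp only [hF, Finset.mem_filter, hfin.mem_toFinset] at hpF
  refine ⟨p, ⟨hpF.1, ?_, ?_⟩, hpF.2.1, hpF.2.2⟩
  · intro hmem
    have h1 : (p.1 + 1, p.2) ∈ F := by
      simp only [hF, Finset.mem_filter, hfin.mem_toFinset]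
      exact ⟨hmem, by omega, by omega⟩
    have := hmax _ h1
    simp at this
  · intro hmem
    have h1 : (p.1, p.2 + 1) ∈ F := by
      simp only [hF, Finset.mem_filter, hfin.mem_toFinset]
      exact ⟨hmem, by omega, by omega⟩
    have := hmax _ h1
    simp at this

/-- Every nonempty generalized rectangle in `Y` is dominated by some step. -/
lemma rect_dominated {r c : ℕ} {Y : Set (ℕ × ℕ)} (hY : IsYoung r c Y)
    (hfin : Y.Finite) {R : Set (ℕ × ℕ)} (hR : IsRect Y R) (hne : R.Nonempty) :
    ∃ p, IsStep Y p ∧ ∀ q ∈ R, q.1 ≤ p.1 ∧ q.2 ≤ p.2 := by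
  classical
  obtain ⟨⟨S, T, rfl⟩, hsub⟩ := hR
  have hRfin : (S ×ˢ T : Set (ℕ × ℕ)).Finite := hfin.subset hsub
  have hRfne : hRfin.toFinset.Nonempty := by
    obtain ⟨x, hx⟩ := hne
    exact ⟨x, by simpa [hRfin.mem_toFinset] using hx⟩
  obtain ⟨x, hx, hxmax⟩ := hRfin.toFinset.exists_max_image Prod.fst hRfne
  obtain ⟨y, hy, hymax⟩ := hRfin.toFinset.exists_max_image Prod.snd hRfne
  rw [hRfin.mem_toFinset] at hx hy
  have hmemR : (x.1, y.2) ∈ S ×ˢ T := ⟨hx.1, hy.2⟩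
  obtain ⟨p, hp, hp1, hp2⟩ := exists_step_above hY hfin (hsub hmemR)
  refine ⟨p, hp, fun q hq => ?_⟩
  have hq1 : q.1 ≤ x.1 := hxmax q (hRfin.mem_toFinset.2 hq)
  have hq2 : q.2 ≤ y.2 := hymax q (hRfin.mem_toFinset.2 hq)
  exact ⟨le_trans hq1 hp1, le_trans hq2 hp2⟩

theorem exists_cover_with_exactly_z_rectangles (i j z r c : ℕ) (Y : Set (ℕ × ℕ))
    (hY : IsYoung r c Y) (hz : (steps Y).ncard = z)
    (C : Finset (Set (ℕ × ℕ))) (hC : IsLocalCover i j Y C) :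
    ∃ C' : Finset (Set (ℕ × ℕ)), IsLocalCover i j Y C' ∧ C'.card = z := by
  classical
  obtain ⟨⟨hmem, hUnion⟩, hrow, hcol⟩ := hC
  have hfin : Y.Finite :=
    (((Set.finite_Icc 1 r).prod (Set.finite_Icc 1 c)).subset hY.1)
  -- the "dominating step" of a rectangle
  set P : Set (ℕ × ℕ) → Prop :=
    fun R => ∃ p, IsStep Y p ∧ ∀ q ∈ R, q.1 ≤ p.1 ∧ q.2 ≤ p.2 with hP
  set f : Set (ℕ × ℕ) → ℕ × ℕ :=
    fun R => if h : P R then h.choose else (0, 0) with hf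
  have hfspec : ∀ R, P R → IsStep Y (f R) ∧ ∀ q ∈ R, q.1 ≤ (f R).1 ∧ q.2 ≤ (f R).2 := by
    intro R h
    simp only [hf, dif_pos h]
    exact h.choose_spec
  have hPC : ∀ R ∈ C, R.Nonempty → P R :=
    fun R hR hne => rect_dominated hY hfin (hmem R hR) hne
  have hfR : ∀ R ∈ C, R.Nonempty →
      IsStep Y (f R) ∧ ∀ q ∈ R, q.1 ≤ (f R).1 ∧ q.2 ≤ (f R).2 :=
    fun R hR hne => hfspec R (hPC R hR hne)
  -- if a step lies in a rectangle of the cover, it is its dominating step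
  have hstep_f : ∀ R ∈ C, ∀ p, IsStep Y p → p ∈ R → f R = p := by
    intro R hR p hp hpR
    have hspec := hfR R hR ⟨p, hpR⟩
    exact step_eq hY hp hspec.1.1 (hspec.2 p hpR).1 (hspec.2 p hpR).2
  -- the merged rectangles
  set Sp : ℕ × ℕ → Set ℕ :=
    fun p => {s | ∃ R ∈ C, R.Nonempty ∧ f R = p ∧ UsesRow R s} with hSp
  set Tp : ℕ × ℕ → Set ℕ :=
    fun p => {t | ∃ R ∈ C, R.Nonempty ∧ f R = p ∧ UsesCol R t} with hTp
  set Rp : ℕ × ℕ → Set (ℕ × ℕ) := fun p => Sp p ×ˢ Tp p with hRp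
  have hRpbox : ∀ p, IsStep Y p → ∀ q ∈ Rp p,
      1 ≤ q.1 ∧ q.1 ≤ p.1 ∧ 1 ≤ q.2 ∧ q.2 ≤ p.2 := by
    intro p hp q hq
    obtain ⟨⟨R, hRC, hRne, hfReq, t, hqt⟩, ⟨R', hR'C, hR'ne, hfR'eq, s', hs't⟩⟩ := hq
    have hY1 : (q.1, t) ∈ Y := (hmem R hRC).2 hqt
    have hY2 : (s', q.2) ∈ Y := (hmem R' hR'C).2 hs't
    have h1 := (hfR R hRC hRne).2 _ hqt
    have h2 := (hfR R' hR'C hR'ne).2 _ hs't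
    rw [hfReq] at h1
    rw [hfR'eq] at h2
    exact ⟨(mem_young_pos hY hY1).1, h1.1, (mem_young_pos hY hY2).2, h2.2⟩
  have hRpY : ∀ p, IsStep Y p → Rp p ⊆ Y := by
    intro p hp q hq
    have hb := hRpbox p hp q hq
    have : (q.1, q.2) ∈ Y :=
      young_down hY (a := p.1) (b := p.2) (by simpa using hp.1)
        hb.1 hb.2.1 hb.2.2.1 hb.2.2.2
    simpa using this
  have hsubRp : ∀ R ∈ C, R.Nonempty → R ⊆ Rp (f R) := by
    intro R hRC hne q hqR
    refine ⟨⟨R, hRC, hne, rfl, ⟨q.2, by simpa using hqR⟩⟩,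
            ⟨R, hRC, hne, rfl, ⟨q.1, by simpa using hqR⟩⟩⟩
  have hcovstep : ∀ p, IsStep Y p → ∃ R ∈ C, R.Nonempty ∧ f R = p ∧ p ∈ R := by
    intro p hp
    have : p ∈ ⋃ R ∈ C, R := by rw [hUnion]; exact hp.1
    obtain ⟨R, hRC, hpR⟩ := Set.mem_iUnion₂.1 this
    exact ⟨R, hRC, ⟨p, hpR⟩, hstep_f R hRC p hp hpR, hpR⟩
  have hpRp : ∀ p, IsStep Y p → p ∈ Rp p := by
    intro p hp
    obtain ⟨R, hRC, hne, hfeq, hpR⟩ := hcovstep p hp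
    have := hsubRp R hRC hne hpR
    rwa [hfeq] at this
  -- the finset of steps
  have hsfin : (steps Y).Finite := hfin.subset (fun p hp => hp.1)
  set stepsF := hsfin.toFinset with hstepsF
  have hmemstepsF : ∀ p, p ∈ stepsF ↔ IsStep Y p := by
    intro p; rw [hstepsF, hsfin.mem_toFinset]; rfl
  set C' := stepsF.image Rp with hC'
  have hinj : Set.InjOn Rp ↑stepsF := by
    intro p hp q hq h
    rw [Finset.mem_coe, hmemstepsF] at hp hq
    have h1 := hRpbox q hq p (h ▸ hpRp p hp)
    have h2 := hRpbox p hp q (h ▸ hpRp q hq)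
    exact Prod.ext (le_antisymm h1.2.1 h2.2.1) (le_antisymm h1.2.2.2 h2.2.2.2)
  refine ⟨C', ⟨⟨?_, ?_⟩, ?_, ?_⟩, ?_⟩
  · -- rectangles
    intro R hR
    rw [hC', Finset.mem_image] at hR
    obtain ⟨p, hp, rfl⟩ := hR
    rw [hmemstepsF] at hp
    exact ⟨⟨Sp p, Tp p, rfl⟩, hRpY p hp⟩
  · -- union
    apply Set.Subset.antisymm
    · refine Set.iUnion₂_subset fun R hR => ?_
      rw [hC', Finset.mem_image] at hR
      obtain ⟨p, hp, rfl⟩ := hR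
      rw [hmemstepsF] at hp
      exact hRpY p hp
    · intro y hy
      rw [← hUnion] at hy
      obtain ⟨R, hRC, hyR⟩ := Set.mem_iUnion₂.1 hy
      have hne : R.Nonempty := ⟨y, hyR⟩
      refine Set.mem_iUnion₂.2 ⟨Rp (f R), ?_, hsubRp R hRC hne hyR⟩
      rw [hC', Finset.mem_image]
      exact ⟨f R, (hmemstepsF _).2 (hfR R hRC hne).1, rfl⟩
  · -- row locality
    intro s
    have key : (C'.filter (fun R => UsesRow R s)).card ≤
        (C.filter (fun R => UsesRow R s)).card := by
      rw [hC', Finset.filter_image]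
      refine le_trans Finset.card_image_le ?_
      set g : ℕ × ℕ → Set (ℕ × ℕ) := fun p =>
        if h : ∃ R, R ∈ C ∧ R.Nonempty ∧ f R = p ∧ UsesRow R s
        then h.choose else ∅ with hg
      have hgspec : ∀ p, (∃ R, R ∈ C ∧ R.Nonempty ∧ f R = p ∧ UsesRow R s) →
          g p ∈ C ∧ (g p).Nonempty ∧ f (g p) = p ∧ UsesRow (g p) s := by
        intro p h
        simp only [hg, dif_pos h]
        exact h.choose_spec
      have hex : ∀ p ∈ stepsF.filter (fun p => UsesRow (Rp p) s),
          ∃ R, R ∈ C ∧ R.Nonempty ∧ f R = p ∧ UsesRow R s := by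
        intro p hp
        rw [Finset.mem_filter] at hp
        obtain ⟨t, hst⟩ := hp.2
        obtain ⟨R, hRC, hRne, hfeq, hrow⟩ := hst.1
        exact ⟨R, hRC, hRne, hfeq, hrow⟩
      refine Finset.card_le_card_of_injOn g ?_ ?_
      · intro p hp
        have h := hgspec p (hex p hp)
        rw [Finset.mem_coe, Finset.mem_filter]
        exact ⟨h.1, h.2.2.2⟩
      · intro p hp q hq heq
        have h1 := hgspec p (hex p hp)
        have h2 := hgspec q (hex q hq)
        rw [← h1.2.2.1, ← h2.2.2.1, heq]
    exact le_trans key (hrow s)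
  · -- column locality
    intro t
    have key : (C'.filter (fun R => UsesCol R t)).card ≤
        (C.filter (fun R => UsesCol R t)).card := by
      rw [hC', Finset.filter_image]
      refine le_trans Finset.card_image_le ?_
      set g : ℕ × ℕ → Set (ℕ × ℕ) := fun p =>
        if h : ∃ R, R ∈ C ∧ R.Nonempty ∧ f R = p ∧ UsesCol R t
        then h.choose else ∅ with hg
      have hgspec : ∀ p, (∃ R, R ∈ C ∧ R.Nonempty ∧ f R = p ∧ UsesCol R t) →
          g p ∈ C ∧ (g p).Nonempty ∧ f (g p) = p ∧ UsesCol (g p) t := by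
        intro p h
        simp only [hg, dif_pos h]
        exact h.choose_spec
      have hex : ∀ p ∈ stepsF.filter (fun p => UsesCol (Rp p) t),
          ∃ R, R ∈ C ∧ R.Nonempty ∧ f R = p ∧ UsesCol R t := by
        intro p hp
        rw [Finset.mem_filter] at hp
        obtain ⟨s, hst⟩ := hp.2
        obtain ⟨R, hRC, hRne, hfeq, hcl⟩ := hst.2
        exact ⟨R, hRC, hRne, hfeq, hcl⟩
      refine Finset.card_le_card_of_injOn g ?_ ?_
      · intro p hp
        have h := hgspec p (hex p hp)
        rw [Finset.mem_coe, Finset.mem_filter]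
        exact ⟨h.1, h.2.2.2⟩
      · intro p hp q hq heq
        have h1 := hgspec p (hex p hp)
        have h2 := hgspec q (hex q hq)
        rw [← h1.2.2.1, ← h2.2.2.1, heq]
    exact le_trans key (hcol t)
  · -- cardinality
    rw [hC', Finset.card_image_of_injOn hinj, ← hz, hstepsF,
      Set.ncard_eq_toFinset_card (steps Y) hsfin]
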